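/- Let A ∈ F_q^{n×m} be a matrix of rank 2, with n ≥ 2. Then there exist at least three distinct matrices M ∈ F_q^{n×m} with rank(M) = 1 and rank(A − M) = 1. -/

import Mathlib

open Matrix

lemma rank_vecMulVec_le {F : Type*} [Field F] {n m : ℕ}
    (w : Fin n → F) (γ : Fin m → F) : (vecMulVec w γ).rank ≤ 1 := by
  rw [vecMulVec_eq Unit w γ]
  calc (replicateCol Unit w * replicateRow Unit γ).rank ≤ (replicateRow Unit γ).rank := rank_mul_le_right _ _
    _ ≤ Fintype.card Unit := rank_le_card_height _
    _ = 1 := Fintype.card_unit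

lemma rank_vecMulVec_eq_one {F : Type*} [Field F] {n m : ℕ}
    {w : Fin n → F} {γ : Fin m → F} (hw : w ≠ 0) (hγ : γ ≠ 0) :
    (vecMulVec w γ).rank = 1 := by
  refine le_antisymm (_root_.rank_vecMulVec_le w γ) ?_
  rw [Nat.one_le_iff_ne_zero, Matrix.rank]
  rw [Ne, Submodule.finrank_eq_zero, Submodule.eq_bot_iff]
  intro h
  obtain ⟨j, hj⟩ := Function.ne_iff.mp hγ
  obtain ⟨i, hi⟩ := Function.ne_iff.mp hw
  have := h ((vecMulVec w γ).mulVec (Pi.single j 1)) ⟨_, rfl⟩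
  have := congr_fun this i
  simp [mulVec_single, vecMulVec_apply] at this
  tauto

theorem three_rank_one_decompositions (F : Type*) [Field F] [Fintype F]
    {n m : ℕ} (hn : 2 ≤ n) (hm : 2 ≤ m)
    (A : Matrix (Fin n) (Fin m) F) (hA : A.rank = 2) :
    ∃ M₁ M₂ M₃ : Matrix (Fin n) (Fin m) F,
      M₁ ≠ M₂ ∧ M₁ ≠ M₃ ∧ M₂ ≠ M₃ ∧
      M₁.rank = 1 ∧ (A - M₁).rank = 1 ∧
      M₂.rank = 1 ∧ (A - M₂).rank = 1 ∧
      M₃.rank = 1 ∧ (A - M₃).rank = 1 := by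
  classical
  set R := LinearMap.range A.mulVecLin with hR
  have hfr : Module.finrank F R = 2 := hA
  let b : Module.Basis (Fin 2) F R := Module.finBasisOfFinrankEq F R hfr
  set u : Fin n → F := (b 0 : Fin n → F) with hu
  set v : Fin n → F := (b 1 : Fin n → F) with hv
  have hmemcol : ∀ j, (fun i => A i j) ∈ R := by
    intro j
    refine ⟨Pi.single j 1, ?_⟩
    simp [mulVecLin_apply, mulVec_single]; rfl
  set α : Fin m → F := fun j => b.repr ⟨fun i => A i j, hmemcol j⟩ 0 with hα
  set β : Fin m → F := fun j => b.repr ⟨fun i => A i j, hmemcol j⟩ 1 with hβ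
  have hAij : ∀ i j, A i j = u i * α j + v i * β j := by
    intro i j
    have hs := b.sum_repr ⟨fun i => A i j, hmemcol j⟩
    rw [Fin.sum_univ_two] at hs
    have h2 := congr_fun (congr_arg Subtype.val hs) i
    simp only [Submodule.coe_add, SetLike.val_smul, Pi.add_apply, Pi.smul_apply,
      smul_eq_mul] at h2
    rw [← h2, hα, hβ, hu, hv]
    ring
  -- nonvanishing of u, v, u-v
  have hu0 : u ≠ 0 := by
    intro h
    have h' : (b 0 : Fin n → F) = 0 := h
    exact Module.Basis.ne_zero b 0 (Submodule.coe_eq_zero.mp h')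
  have hv0 : v ≠ 0 := by
    intro h
    have h' : (b 1 : Fin n → F) = 0 := h
    exact Module.Basis.ne_zero b 1 (Submodule.coe_eq_zero.mp h')
  have huv : u ≠ v := by
    intro h
    have : b 0 = b 1 := Subtype.ext h
    exact absurd (b.injective this) (by decide)
  have hvu : v - u ≠ 0 := fun h => huv (by
    have := sub_eq_zero.mp h; exact this.symm)
  -- rank-≤-1 contradiction helper
  have hcontra : ∀ (w : Fin n → F) (γ : Fin m → F), A ≠ vecMulVec w γ := by
    intro w γ h
    have := _root_.rank_vecMulVec_le w γ
    rw [← h, hA] at this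
    omega
  have hα0 : α ≠ 0 := by
    intro h
    refine hcontra v β ?_
    ext i j
    have := hAij i j
    rw [h] at this
    simpa [vecMulVec_apply] using this
  have hβ0 : β ≠ 0 := by
    intro h
    refine hcontra u α ?_
    ext i j
    have := hAij i j
    rw [h] at this
    simpa [vecMulVec_apply] using this
  have hαβ : α + β ≠ 0 := by
    intro h
    refine hcontra (u - v) α ?_
    ext i j
    have hb : β j = -α j := by
      have := congr_fun h j; simpa [eq_neg_iff_add_eq_zero, add_comm] using this
    rw [hAij i j, hb]
    simp [vecMulVec_apply]; ring
  refine ⟨vecMulVec u α, vecMulVec v β, vecMulVec u (α + β), ?_, ?_, ?_, ?_, ?_, ?_, ?_, ?_, ?_⟩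
  · intro h
    refine hcontra v (2 • β) ?_
    ext i j
    rw [hAij i j]
    have := congr_fun (congr_fun h i) j
    simp [vecMulVec_apply] at this ⊢
    rw [this]; ring
  · intro h
    obtain ⟨i, hi⟩ := Function.ne_iff.mp hu0
    obtain ⟨j, hj⟩ := Function.ne_iff.mp hβ0
    have := congr_fun (congr_fun h i) j
    simp [vecMulVec_apply] at this
    rcases this with h2 | h2
    · exact hj h2
    · exact hi h2
  · intro h
    refine hcontra u (2 • α + β) ?_
    ext i j
    rw [hAij i j]
    have := congr_fun (congr_fun h i) j
    simp [vecMulVec_apply] at this ⊢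
    rw [this]; ring
  · exact rank_vecMulVec_eq_one hu0 hα0
  · have : A - vecMulVec u α = vecMulVec v β := by
      ext i j; simp [vecMulVec_apply, hAij i j]
    rw [this]; exact rank_vecMulVec_eq_one hv0 hβ0
  · exact rank_vecMulVec_eq_one hv0 hβ0
  · have : A - vecMulVec v β = vecMulVec u α := by
      ext i j; simp [vecMulVec_apply, hAij i j]
    rw [this]; exact rank_vecMulVec_eq_one hu0 hα0
  · exact rank_vecMulVec_eq_one hu0 hαβ
  · have : A - vecMulVec u (α + β) = vecMulVec (v - u) β := by
      ext i j; simp [vecMulVec_apply, hAij i j]; ring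
    rw [this]; exact rank_vecMulVec_eq_one hvu hβ0
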